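/- Fix n ≥ 1 and 1 ≤ k ≤ n. Suppose Ψ is an invertible n×n complex matrix satisfying Ψᵀ·Ψ = η, where η is the n×n matrix with η_{ab} = 1 if a+b = n+1 and 0 otherwise. Let C_k(Ψ) denote the k-th multiplicative compound of Ψ (the matrix of k×k minors, indexed by increasing k-subsets of {1,…,n} in lexicographic order), and set Ψ^𝔾 := i^{k(k−1)/2}·C_k(Ψ). Then (Ψ^𝔾)ᵀ·Ψ^𝔾 = η^𝔾, where η^𝔾 is the matrix with entries (η^𝔾)_{IJ} = 1 if the increasing k-subsets I = {i₁<…<i_k} and J = {j₁<…<j_k} satisfy j_b = n+1−i_{k+1−b} for all b (i.e. J is the order-reversed complement pairing of I), and (η^𝔾)_{IJ} = 0 otherwise; in particular η^𝔾 is a symmetric permutation matrix. -/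

import Mathlib

open Matrix Complex

/-- The Gram matrix `η` of the Poincaré pairing of `ℙ^{n-1}` in the basis `(1, σ, …, σ^{n-1})`:
`η_{ab} = 1` iff `a + b = n + 1` in 1-based indices, i.e. `a + b + 1 = n` in 0-based indices. -/
def poincareMetric (n : ℕ) : Matrix (Fin n) (Fin n) ℂ :=
  fun a b => if (a : ℕ) + (b : ℕ) + 1 = n then 1 else 0

/-- The `k`-th multiplicative compound `C_k(X)` of an `n × n` matrix `X`: the matrix of all
`k × k` minors, with rows and columns indexed by the `k`-element subsets of `{1, …, n}`
(each subset enumerated in increasing order). -/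
noncomputable def compound (n k : ℕ) (X : Matrix (Fin n) (Fin n) ℂ) :
    Matrix {s : Finset (Fin n) // s.card = k} {s : Finset (Fin n) // s.card = k} ℂ :=
  fun I J => (X.submatrix (fun a => I.1.orderEmbOfFin I.2 a)
    (fun b => J.1.orderEmbOfFin J.2 b)).det

/-- The Gram matrix `η^𝔾` of the Poincaré pairing of the Grassmannian: `(η^𝔾)_{IJ} = 1` iff
`j_b = n + 1 - i_{k+1-b}` for all `b` (in 1-based values), i.e. iff the enumerations satisfy
`(j_b) + (i_{rev b}) + 1 = n` in 0-based values, and `0` otherwise. -/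
def grassmannMetric (n k : ℕ) :
    Matrix {s : Finset (Fin n) // s.card = k} {s : Finset (Fin n) // s.card = k} ℂ :=
  fun I J =>
    if ∀ b : Fin k,
        ((J.1.orderEmbOfFin J.2 b : Fin n) : ℕ) +
          ((I.1.orderEmbOfFin I.2 (Fin.rev b) : Fin n) : ℕ) + 1 = n
    then 1 else 0

section Aux
open Finset Equiv

variable {k n : ℕ}

abbrev enum (S : {s : Finset (Fin n) // s.card = k}) : Fin k → Fin n :=
  fun a => S.1.orderEmbOfFin S.2 a

lemma card_image_univ {f : Fin k → Fin n} (hf : Function.Injective f) :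
    (Finset.univ.image f).card = k := by
  rw [Finset.card_image_of_injective _ hf, Finset.card_univ, Fintype.card_fin]

noncomputable def setOf' {f : Fin k → Fin n} (hf : Function.Injective f) :
    {s : Finset (Fin n) // s.card = k} := ⟨Finset.univ.image f, card_image_univ hf⟩

noncomputable def permOf {f : Fin k → Fin n} (hf : Function.Injective f) : Perm (Fin k) :=
  Equiv.ofBijective
    (fun a => ((Finset.univ.image f).orderIsoOfFin (card_image_univ hf)).symm
      ⟨f a, Finset.mem_image_of_mem f (Finset.mem_univ a)⟩)
    (Finite.injective_iff_bijective.mp (by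
      intro a a' h
      apply hf
      have := congrArg ((Finset.univ.image f).orderIsoOfFin (card_image_univ hf)) h
      simpa [Subtype.ext_iff] using this))

lemma enum_permOf {f : Fin k → Fin n} (hf : Function.Injective f) (a : Fin k) :
    enum (setOf' hf) (permOf hf a) = f a := by
  show ((Finset.univ.image f).orderEmbOfFin (card_image_univ hf)) _ = f a
  rw [← Finset.coe_orderIsoOfFin_apply]
  simp [permOf, Equiv.ofBijective_apply]

lemma image_enum (S : {s : Finset (Fin n) // s.card = k}) :
    Finset.univ.image (enum S) = S.1 := by
  ext x
  simp only [Finset.mem_image, Finset.mem_univ, true_and]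
  constructor
  · rintro ⟨a, rfl⟩; exact Finset.orderEmbOfFin_mem _ _ _
  · intro hx
    have hr := Finset.range_orderEmbOfFin S.1 S.2
    have : x ∈ Set.range (S.1.orderEmbOfFin S.2) := by rw [hr]; exact hx
    obtain ⟨a, ha⟩ := this
    exact ⟨a, ha⟩


lemma sum_inj_eq_sum_pairs (T : (Fin k → Fin n) → ℂ) :
    ∑ f ∈ Finset.univ.filter (fun f : Fin k → Fin n => Function.Injective f), T f
      = ∑ x ∈ Finset.univ ×ˢ Finset.univ,
          T (enum (x.1 : {s : Finset (Fin n) // s.card = k}) ∘ (x.2 : Perm (Fin k))) := by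
  refine Finset.sum_bij'
    (i := fun f hf => (setOf' (Finset.mem_filter.mp hf).2, permOf (Finset.mem_filter.mp hf).2))
    (j := fun p _ => enum p.1 ∘ p.2) ?_ ?_ ?_ ?_ ?_
  · intro f hf; simp
  · intro p hp
    simp only [Finset.mem_filter, Finset.mem_univ, true_and]
    exact fun a b h => p.2.injective ((p.1.1.orderEmbOfFin p.1.2).injective h)
  · intro f hf
    funext a
    exact enum_permOf (Finset.mem_filter.mp hf).2 a
  · rintro ⟨S, σ⟩ hp
    have hS : ∀ h : Function.Injective (enum S ∘ ⇑σ), setOf' h = S := by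
      intro h
      apply Subtype.ext
      show Finset.univ.image (enum S ∘ ⇑σ) = S.1
      rw [← Finset.image_image, Finset.image_univ_equiv, image_enum]
    have hperm : ∀ h : Function.Injective (enum S ∘ ⇑σ), permOf h = σ := by
      intro h
      refine Equiv.ext fun a => ?_
      have h1 := enum_permOf h a
      rw [hS h] at h1
      exact (S.1.orderEmbOfFin S.2).injective h1
    have hinj : Function.Injective (enum S ∘ ⇑σ) :=
      fun a b h => σ.injective ((S.1.orderEmbOfFin S.2).injective h)
    exact Prod.ext (hS hinj) (hperm hinj)
  · intro f hf
    exact congrArg T (funext fun a => (enum_permOf (Finset.mem_filter.mp hf).2 a).symm)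

lemma det_mul_expand (A : Matrix (Fin k) (Fin n) ℂ) (B : Matrix (Fin n) (Fin k) ℂ) :
    (A * B).det = ∑ f : Fin k → Fin n, (A.submatrix id f).det * ∏ a, B (f a) a := by
  calc (A * B).det
      = ∑ σ : Perm (Fin k), Perm.sign σ • ∏ a, ∑ x, A (σ a) x * B x a := by
        simp only [Matrix.det_apply, Matrix.mul_apply]
    _ = ∑ σ : Perm (Fin k), ∑ f : Fin k → Fin n,
          Perm.sign σ • ∏ a, A (σ a) (f a) * B (f a) a := by
        simp only [Finset.prod_univ_sum, Fintype.piFinset_univ, Finset.smul_sum]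
    _ = ∑ f : Fin k → Fin n, ∑ σ : Perm (Fin k),
          Perm.sign σ • ((∏ a, A (σ a) (f a)) * ∏ a, B (f a) a) := by
        rw [Finset.sum_comm]
        simp only [Finset.prod_mul_distrib]
    _ = ∑ f : Fin k → Fin n,
          (∑ σ : Perm (Fin k), Perm.sign σ • ∏ a, A (σ a) (f a)) * ∏ a, B (f a) a := by
        refine Finset.sum_congr rfl fun f _ => ?_
        rw [Finset.sum_mul]
        exact Finset.sum_congr rfl fun σ _ => (smul_mul_assoc _ _ _).symm
    _ = _ := by
        refine Finset.sum_congr rfl fun f _ => ?_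
        congr 1
        simp [Matrix.det_apply]

lemma det_submatrix_zero_of_not_inj (A : Matrix (Fin k) (Fin n) ℂ) {f : Fin k → Fin n}
    (hf : ¬ Function.Injective f) : (A.submatrix id f).det = 0 := by
  rw [← Matrix.det_transpose, Matrix.transpose_submatrix]
  simp only [Function.not_injective_iff] at hf
  obtain ⟨a, b, hab, hne⟩ := hf
  exact Matrix.det_zero_of_row_eq hne (by ext j; simp [hab])

lemma cauchyBinet (A : Matrix (Fin k) (Fin n) ℂ) (B : Matrix (Fin n) (Fin k) ℂ) :
    (A * B).det = ∑ S : {s : Finset (Fin n) // s.card = k},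
      (A.submatrix id (enum S)).det * (B.submatrix (enum S) id).det := by
  rw [det_mul_expand]
  rw [← Finset.sum_filter_of_ne (p := fun f => Function.Injective f)
    (fun f _ hf => by
      by_contra h
      exact hf (by rw [det_submatrix_zero_of_not_inj A h, zero_mul]))]
  have key : ∀ S : {s : Finset (Fin n) // s.card = k},
      (A.submatrix id (enum S)).det * (B.submatrix (enum S) id).det
        = ∑ σ : Perm (Fin k),
            (A.submatrix id (enum S ∘ σ)).det * ∏ a, B ((enum S ∘ σ) a) a := by
    intro S
    have hd : ∀ σ : Perm (Fin k), (A.submatrix id (enum S ∘ σ)).det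
        = Perm.sign σ • (A.submatrix id (enum S)).det := by
      intro σ
      have : A.submatrix id (enum S ∘ σ) = (A.submatrix id (enum S)).submatrix id σ := rfl
      rw [this, Matrix.det_permute', Units.smul_def, zsmul_eq_mul]
    have hB : (B.submatrix (enum S) id).det
        = ∑ σ : Perm (Fin k), Perm.sign σ • ∏ a, B (enum S (σ a)) a := by
      simp [Matrix.det_apply]
    rw [hB, Finset.mul_sum]
    refine Finset.sum_congr rfl fun σ _ => ?_
    rw [hd σ]
    simp only [Function.comp_apply, Units.smul_def, zsmul_eq_mul]
    ring
  rw [Finset.sum_congr rfl fun S _ => key S, ← Finset.sum_product']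
  exact sum_inj_eq_sum_pairs _

def Pc (I J : {s : Finset (Fin n) // s.card = k}) : Prop :=
  ∀ b : Fin k, (enum J b : ℕ) + (enum I (Fin.rev b) : ℕ) + 1 = n

lemma image_enum' (S : {s : Finset (Fin n) // s.card = k}) {x : Fin n} (hx : x ∈ S.1) :
    ∃ a, enum S a = x := by
  have hr := Finset.range_orderEmbOfFin S.1 S.2
  have : x ∈ Set.range (S.1.orderEmbOfFin S.2) := by rw [hr]; exact hx
  exact this

lemma Pc_iff (I J : {s : Finset (Fin n) // s.card = k}) :
    Pc I J ↔ I.1.image Fin.rev = J.1 := by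
  constructor
  · intro hP
    have hsub : J.1 ⊆ I.1.image Fin.rev := by
      intro x hx
      obtain ⟨b, rfl⟩ := image_enum' J hx
      have hb := hP b
      have : enum J b = Fin.rev (enum I (Fin.rev b)) := by
        apply Fin.ext
        rw [Fin.val_rev]
        omega
      rw [this]
      exact Finset.mem_image_of_mem _ (Finset.orderEmbOfFin_mem _ _ _)
    refine (Finset.eq_of_subset_of_card_le hsub ?_).symm
    rw [Finset.card_image_of_injective _ Fin.rev_injective, I.2, J.2]
  · intro himg b
    have hmono : StrictMono (fun b : Fin k => Fin.rev (enum I (Fin.rev b))) := by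
      intro b b' hbb
      simp only
      rw [Fin.rev_lt_rev]
      exact (I.1.orderEmbOfFin I.2).strictMono (Fin.rev_lt_rev.mpr hbb)
    have hmem : ∀ b : Fin k, Fin.rev (enum I (Fin.rev b)) ∈ J.1 := by
      intro b
      rw [← himg]
      exact Finset.mem_image_of_mem _ (Finset.orderEmbOfFin_mem _ _ _)
    have huniq := Finset.orderEmbOfFin_unique J.2 hmem hmono
    rw [show enum J b = Fin.rev (enum I (Fin.rev b)) from (congrFun huniq b).symm, Fin.val_rev]
    have := (enum I (Fin.rev b)).isLt
    omega

lemma rev_decomp (k : ℕ) :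
    finRotate (k+1) * (Fin.revPerm : Perm (Fin (k+1))) =
      Equiv.Perm.decomposeFin.symm (0, (Fin.revPerm : Perm (Fin k))) := by
  ext i
  refine Fin.cases ?_ (fun j => ?_) i
  · simp [Fin.rev_zero, finRotate_last]
  · simp [Fin.rev_succ, Equiv.Perm.decomposeFin_symm_apply_succ]

lemma tri_eq (k : ℕ) : k + k * (k-1) / 2 = (k+1) * k / 2 := by
  rcases k with _ | j
  · rfl
  · obtain ⟨m, hm⟩ := Nat.even_mul_succ_self j
    have h3 : (j+1) * j = m + m := by rw [Nat.mul_comm]; exact hm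
    have h4 : (j+1+1) * (j+1) = (j+1) * j + 2 * (j+1) := by ring
    simp only [Nat.add_sub_cancel]
    omega

lemma sign_revPerm (k : ℕ) :
    Equiv.Perm.sign (Fin.revPerm : Perm (Fin k)) = (-1) ^ (k * (k-1) / 2) := by
  induction k with
  | zero => simp [Fin.revPerm]; rfl
  | succ k ih =>
    have h := congrArg Equiv.Perm.sign (rev_decomp k)
    rw [_root_.map_mul, Equiv.Perm.decomposeFin.symm_sign, sign_finRotate, ih, if_pos rfl,
      one_mul] at h
    have h' : Equiv.Perm.sign (Fin.revPerm : Perm (Fin (k+1))) =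
        (-1:ℤˣ)^k * (-1)^(k*(k-1)/2) := by
      have hsq : ((-1:ℤˣ)^k) * ((-1:ℤˣ)^k) = 1 := by
        rw [← pow_add, ← two_mul, pow_mul]; norm_num
      calc Equiv.Perm.sign (Fin.revPerm : Perm (Fin (k+1)))
          = ((-1:ℤˣ)^k * (-1:ℤˣ)^k) * Equiv.Perm.sign (Fin.revPerm : Perm (Fin (k+1))) := by
            rw [hsq, one_mul]
        _ = (-1:ℤˣ)^k * ((-1:ℤˣ)^k * Equiv.Perm.sign (Fin.revPerm : Perm (Fin (k+1)))) := by
            rw [mul_assoc]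
        _ = (-1:ℤˣ)^k * (-1)^(k*(k-1)/2) := by rw [Nat.add_sub_cancel] at h; rw [h]
    rw [h', ← pow_add, tri_eq, Nat.add_sub_cancel]

open scoped Classical in
lemma det_eta (I J : {s : Finset (Fin n) // s.card = k}) :
    ((poincareMetric n).submatrix (enum I) (enum J)).det =
      if Pc I J then ((-1 : ℂ)) ^ (k * (k-1) / 2) else 0 := by
  by_cases hP : Pc I J
  · rw [if_pos hP]
    have hmat : (poincareMetric n).submatrix (enum I) (enum J)
        = (Fin.revPerm : Perm (Fin k)).permMatrix ℂ := by
      ext a b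
      simp only [submatrix_apply, poincareMetric, Equiv.Perm.permMatrix,
        PEquiv.toMatrix_apply, Equiv.toPEquiv_apply, Option.mem_def, Option.some.injEq,
        Fin.revPerm_apply]
      have hcond : (enum I a : ℕ) + (enum J b : ℕ) + 1 = n ↔ Fin.rev a = b := by
        constructor
        · intro h
          have hb := hP b
          have : (enum I a : ℕ) = (enum I (Fin.rev b) : ℕ) := by omega
          have ha : a = Fin.rev b := (I.1.orderEmbOfFin I.2).injective (Fin.ext this)
          rw [ha, Fin.rev_rev]
        · intro h
          have hb := hP b
          rw [show a = Fin.rev b from by rw [← h, Fin.rev_rev]]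
          omega
      by_cases h : (enum I a : ℕ) + (enum J b : ℕ) + 1 = n
      · rw [if_pos h, if_pos (hcond.mp h)]
      · rw [if_neg h, if_neg (fun hc => h (hcond.mpr hc))]
    rw [hmat, Matrix.det_permutation, sign_revPerm]
    push_cast
    norm_num
  · rw [if_neg hP]
    by_cases hall : ∀ b : Fin k, ∃ a : Fin k, (enum I a : ℕ) + (enum J b : ℕ) + 1 = n
    · exfalso
      apply hP
      set A : Fin k → Fin k := fun b => Classical.choose (hall b) with hA
      have hAspec : ∀ b, (enum I (A b) : ℕ) + (enum J b : ℕ) + 1 = n :=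
        fun b => Classical.choose_spec (hall b)
      have hanti : ∀ b b' : Fin k, b < b' → A b' < A b := by
        intro b b' hbb
        have h1 := hAspec b
        have h2 := hAspec b'
        have hj : (enum J b : ℕ) < (enum J b' : ℕ) :=
          (J.1.orderEmbOfFin J.2).strictMono hbb
        have hlt : (enum I (A b') : ℕ) < (enum I (A b) : ℕ) := by omega
        exact (I.1.orderEmbOfFin I.2).strictMono.lt_iff_lt.mp hlt
      have hm : StrictMono (fun b : Fin k => A (Fin.rev b)) := by
        intro b b' hbb
        exact hanti _ _ (Fin.rev_lt_rev.mpr hbb)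
      have hcard : (Finset.univ : Finset (Fin k)).card = k := by simp
      have h1 := Finset.orderEmbOfFin_unique hcard
        (f := fun b : Fin k => A (Fin.rev b)) (fun b => Finset.mem_univ _) hm
      have h2 := Finset.orderEmbOfFin_unique hcard
        (f := fun b : Fin k => b) (fun b => Finset.mem_univ _) strictMono_id
      have hid : ∀ b : Fin k, A (Fin.rev b) = b := fun b => by
        rw [show A (Fin.rev b) = _ from congrFun h1 b, ← congrFun h2 b]
      intro b
      have := hAspec b
      have hb : A b = Fin.rev b := by
        have := hid (Fin.rev b)
        rwa [Fin.rev_rev] at this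
      rw [← hb]
      omega
    · push_neg at hall
      obtain ⟨b, hb⟩ := hall
      apply Matrix.det_eq_zero_of_column_eq_zero b
      intro a
      simp only [submatrix_apply, poincareMetric]
      rw [if_neg (hb a)]

end Aux

lemma Pc_iff' {k n : ℕ} (S T : {s : Finset (Fin n) // s.card = k}) :
    Pc S T ↔ Pc T S := by
  rw [Pc_iff, Pc_iff]
  constructor <;> intro h <;> rw [← h, Finset.image_image] <;>
    simp [Function.comp_def, Fin.rev_rev]

open scoped Classical in
lemma grassmann_eq {k n : ℕ} (S T : {s : Finset (Fin n) // s.card = k}) :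
    grassmannMetric n k S T = if Pc S T then 1 else 0 := by
  unfold grassmannMetric Pc
  congr

theorem stmt14 (n k : ℕ) (hn : 1 ≤ n) (hk : 1 ≤ k) (hkn : k ≤ n)
    (Ψ : Matrix (Fin n) (Fin n) ℂ) (hΨ : IsUnit Ψ)
    (hη : Ψᵀ * Ψ = poincareMetric n) :
    ((I ^ (k * (k - 1) / 2)) • compound n k Ψ)ᵀ *
        ((I ^ (k * (k - 1) / 2)) • compound n k Ψ) = grassmannMetric n k ∧
    (grassmannMetric n k)ᵀ = grassmannMetric n k ∧
    ∃ e : Equiv.Perm {s : Finset (Fin n) // s.card = k},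
      grassmannMetric n k = Matrix.of fun I J => if e I = J then 1 else 0 := by
  classical
  refine ⟨?_, ?_, ?_⟩
  · ext S T
    have hentry : (((I ^ (k * (k - 1) / 2)) • compound n k Ψ)ᵀ *
        ((I ^ (k * (k - 1) / 2)) • compound n k Ψ)) S T
        = (I ^ (k * (k - 1) / 2) * I ^ (k * (k - 1) / 2)) *
            ∑ U : {s : Finset (Fin n) // s.card = k},
              compound n k Ψ U S * compound n k Ψ U T := by
      rw [Matrix.transpose_smul, Matrix.smul_mul, Matrix.mul_smul, smul_smul,
        Matrix.smul_apply, smul_eq_mul]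
      congr 1
    have hCB : ∑ U : {s : Finset (Fin n) // s.card = k},
        compound n k Ψ U S * compound n k Ψ U T
        = ((poincareMetric n).submatrix (enum S) (enum T)).det := by
      have hAB : (Ψᵀ.submatrix (enum S) id) * (Ψ.submatrix id (enum T))
          = (poincareMetric n).submatrix (enum S) (enum T) := by
        rw [← hη]
        ext i j
        simp [Matrix.mul_apply]
      have hcb := cauchyBinet (Ψᵀ.submatrix (enum S) id) (Ψ.submatrix id (enum T))
      rw [hAB] at hcb
      rw [hcb]
      refine Finset.sum_congr rfl fun U _ => ?_
      congr 1
      · show compound n k Ψ U S = ((Ψᵀ.submatrix (enum S) id).submatrix id (enum U)).det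
        rw [show (Ψᵀ.submatrix (enum S) id).submatrix id (enum U)
            = (Ψ.submatrix (enum U) (enum S))ᵀ from rfl, Matrix.det_transpose]
        rfl
    rw [hentry, hCB, det_eta, grassmann_eq]
    by_cases hP : Pc S T
    · rw [if_pos hP, if_pos hP]
      rw [← pow_add, ← two_mul, pow_mul, Complex.I_sq, ← pow_add, ← two_mul, pow_mul]
      norm_num
    · rw [if_neg hP, if_neg hP, mul_zero]
  · ext S T
    rw [Matrix.transpose_apply, grassmann_eq, grassmann_eq, if_congr (Pc_iff' T S) rfl rfl]
  · have hinv : Function.Involutive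
        (fun S : {s : Finset (Fin n) // s.card = k} =>
          (⟨S.1.image Fin.rev, by
            rw [Finset.card_image_of_injective _ Fin.rev_injective]; exact S.2⟩ :
            {s : Finset (Fin n) // s.card = k})) := by
      intro S
      apply Subtype.ext
      show (S.1.image Fin.rev).image Fin.rev = S.1
      rw [Finset.image_image]
      simp [Function.comp_def, Fin.rev_rev]
    refine ⟨hinv.toPerm _, ?_⟩
    ext S T
    rw [grassmann_eq, Matrix.of_apply]
    refine if_congr ?_ rfl rfl
    rw [Pc_iff]
    exact ⟨fun h => Subtype.ext h, fun h => congrArg Subtype.val h⟩
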